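/- Let A and B be measurable spaces, let μ be a probability measure on A × B with marginals μ₁ on A and μ₂ on B, and let T : A × B → ℝ be measurable such that (a,b) ↦ sp(−T(a,b)) is μ-integrable and (a,b) ↦ sp(T(a,b)) is (μ₁ ⊗ μ₂)-integrable, where sp(z) = log(1 + exp z). Then ∫ (− sp(−T)) dμ − ∫ sp(T) d(μ₁ ⊗ μ₂) ≤ 2·JS(μ, μ₁ ⊗ μ₂) − log 4, where JS(P, Q) = (1/2)·KL(P ‖ (1/2)(P+Q)) + (1/2)·KL(Q ‖ (1/2)(P+Q)). -/

import Mathlib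

open MeasureTheory
open scoped ENNReal Classical

/-- The softplus function `sp(z) = log(1 + exp z)`. -/
noncomputable def softplus (z : ℝ) : ℝ := Real.log (1 + Real.exp z)

/-- Kullback–Leibler divergence between measures: `∫ log(dP/dQ) dP` when `P ≪ Q` and the
log-likelihood ratio is `P`-integrable, and `∞` otherwise. -/
noncomputable def klDivM {Ω : Type*} [MeasurableSpace Ω] (P Q : Measure Ω) : ℝ≥0∞ :=
  if P ≪ Q ∧ Integrable (llr P Q) P then ENNReal.ofReal (∫ ω, llr P Q ω ∂P) else ⊤

/-- Jensen–Shannon divergence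
`JS(P, Q) = (1/2)·KL(P ‖ (1/2)(P+Q)) + (1/2)·KL(Q ‖ (1/2)(P+Q))`. -/
noncomputable def jsDiv {Ω : Type*} [MeasurableSpace Ω] (P Q : Measure Ω) : ℝ≥0∞ :=
  2⁻¹ * klDivM P ((2 : ℝ≥0∞)⁻¹ • (P + Q)) + 2⁻¹ * klDivM Q ((2 : ℝ≥0∞)⁻¹ • (P + Q))

/-- `p·log s ≤ p·log p − p·log 2 + 2s − p` for `p ≥ 0`, `s > 0` (Gibbs-type inequality). -/
lemma js_aux1 {p s : ℝ} (hp : 0 ≤ p) (hs : 0 < s) :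
    p * Real.log s - p * Real.log p + p * Real.log 2 ≤ 2 * s - p := by
  rcases eq_or_lt_of_le hp with h | h
  · simp only [← h, zero_mul, sub_zero, add_zero, zero_add, sub_zero]
    nlinarith
  · have hpos : 0 < 2 * s / p := by positivity
    have hlog : Real.log (2 * s / p) = Real.log 2 + Real.log s - Real.log p := by
      rw [Real.log_div (by positivity) h.ne', Real.log_mul two_ne_zero hs.ne']
    have hle := Real.log_le_sub_one_of_pos hpos
    have h2 : p * (2 * s / p - 1) = 2 * s - p := by field_simp
    nlinarith [mul_le_mul_of_nonneg_left hle h.le]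

/-- `|p·log p| ≤ 2` for `p ∈ [0, 2]`. -/
lemma js_aux_bound {p : ℝ} (hp : 0 ≤ p) (hp2 : p ≤ 2) : |p * Real.log p| ≤ 2 := by
  rcases eq_or_lt_of_le hp with h | h
  · simp [← h]
  rcases le_or_gt p 1 with h1 | h1
  · have := Real.abs_log_mul_self_lt p h h1
    rw [abs_mul] at this
    rw [abs_mul]
    calc |p| * |Real.log p| = |Real.log p| * |p| := mul_comm _ _
      _ ≤ 2 := by linarith
  · have hlog0 : 0 ≤ Real.log p := Real.log_nonneg h1.le
    have hlog2 : Real.log p ≤ p - 1 := Real.log_le_sub_one_of_pos h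
    rw [abs_of_nonneg (by positivity)]
    nlinarith

/-- Pointwise key inequality: for `p, q ≥ 0` with `p + q = 2` and any `t`,
`p·log σ(t) + q·log σ(−t) ≤ p·log p + q·log q − log 4`. -/
lemma js_aux2 {p q : ℝ} (t : ℝ) (hp : 0 ≤ p) (hq : 0 ≤ q) (hpq : p + q = 2) :
    p * (-softplus (-t)) + q * (-softplus t) ≤
      p * Real.log p + q * Real.log q - Real.log 4 := by
  set e := Real.exp t with he
  have he0 : 0 < e := Real.exp_pos t
  have hd : 0 < 1 + e := by linarith
  set s : ℝ := e / (1 + e) with hs_def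
  have hs : 0 < s := by positivity
  have hs1 : 0 < 1 - s := by
    rw [hs_def, sub_pos, div_lt_one hd]; linarith
  have h1 : -softplus (-t) = Real.log s := by
    have : (1 : ℝ) + Real.exp (-t) = (1 + e) / e := by
      rw [Real.exp_neg, ← he]; field_simp; ring
    rw [softplus, this, Real.log_div hd.ne' he0.ne', hs_def,
      Real.log_div he0.ne' hd.ne']
    ring
  have h2 : -softplus t = Real.log (1 - s) := by
    have : 1 - s = 1 / (1 + e) := by
      rw [hs_def]; field_simp; ring
    rw [softplus, this, Real.log_div one_ne_zero hd.ne', Real.log_one, ← he]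
    ring
  have hA := js_aux1 hp hs
  have hB := js_aux1 hq hs1
  have h4 : Real.log 4 = Real.log 2 + Real.log 2 := by
    rw [← Real.log_mul two_ne_zero two_ne_zero]; norm_num
  have hpq2 : p * Real.log 2 + q * Real.log 2 = 2 * Real.log 2 := by
    rw [← add_mul, hpq]
  rw [h1, h2]
  linarith

/-- Jensen–Shannon mutual information lower bound (Equation (7)): for a joint probability
measure `μ` on `A × B` with marginals `μ₁`, `μ₂`,
`∫ (−sp(−T)) dμ − ∫ sp(T) d(μ₁ ⊗ μ₂) ≤ 2·JS(μ, μ₁ ⊗ μ₂) − log 4`. -/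
theorem js_mutual_information_bound {A B : Type*} [MeasurableSpace A] [MeasurableSpace B]
    (μ : Measure (A × B)) [IsProbabilityMeasure μ]
    (μ₁ : Measure A) (μ₂ : Measure B)
    (hμ₁ : μ₁ = μ.map Prod.fst) (hμ₂ : μ₂ = μ.map Prod.snd)
    (T : A × B → ℝ) (hT : Measurable T)
    (hμint : Integrable (fun p => softplus (-T p)) μ)
    (hprodint : Integrable (fun p => softplus (T p)) (μ₁.prod μ₂)) :
    (∫ p, -softplus (-T p) ∂μ) - (∫ p, softplus (T p) ∂(μ₁.prod μ₂)) ≤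
      2 * (jsDiv μ (μ₁.prod μ₂)).toReal - Real.log 4 := by
  haveI h1 : IsProbabilityMeasure μ₁ := by
    rw [hμ₁]; exact Measure.isProbabilityMeasure_map measurable_fst.aemeasurable
  haveI h2 : IsProbabilityMeasure μ₂ := by
    rw [hμ₂]; exact Measure.isProbabilityMeasure_map measurable_snd.aemeasurable
  set ν := μ₁.prod μ₂ with hν
  set M := (2 : ℝ≥0∞)⁻¹ • (μ + ν) with hM
  haveI hMprob : IsProbabilityMeasure M := by
    constructor
    simp only [hM, Measure.smul_apply, Measure.coe_add, Pi.add_apply, measure_univ,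
      smul_eq_mul]
    rw [one_add_one_eq_two, ENNReal.inv_mul_cancel two_ne_zero ENNReal.ofNat_ne_top]
  have hμM : μ ≪ M := by
    refine Measure.AbsolutelyContinuous.mk fun s _ h0 => ?_
    simp only [hM, Measure.smul_apply, Measure.coe_add, Pi.add_apply, smul_eq_mul] at h0
    rcases mul_eq_zero.mp h0 with h | h
    · exact absurd h (by simp)
    · exact (add_eq_zero.mp h).1
  have hνM : ν ≪ M := by
    refine Measure.AbsolutelyContinuous.mk fun s _ h0 => ?_
    simp only [hM, Measure.smul_apply, Measure.coe_add, Pi.add_apply, smul_eq_mul] at h0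
    rcases mul_eq_zero.mp h0 with h | h
    · exact absurd h (by simp)
    · exact (add_eq_zero.mp h).2
  -- a.e. sum of densities is 2
  have hsumE : ∀ᵐ x ∂M, μ.rnDeriv M x + ν.rnDeriv M x = 2 := by
    have hadd := Measure.rnDeriv_add μ ν M
    have hsm : ((2 : ℝ≥0∞) • M).rnDeriv M =ᵐ[M] (2 : ℝ≥0∞) • M.rnDeriv M :=
      Measure.rnDeriv_smul_left_of_ne_top M M ENNReal.ofNat_ne_top
    have hself := Measure.rnDeriv_self M
    have hMeq : (2 : ℝ≥0∞) • M = μ + ν := by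
      rw [hM, smul_smul, ENNReal.mul_inv_cancel two_ne_zero ENNReal.ofNat_ne_top, one_smul]
    rw [← hMeq] at hadd
    filter_upwards [hadd, hsm, hself] with x hx1 hx2 hx3
    have := hx1.symm.trans hx2
    simp only [Pi.add_apply, Pi.smul_apply, hx3, smul_eq_mul, mul_one] at this
    exact this
  set rP : A × B → ℝ := fun x => (μ.rnDeriv M x).toReal with hrP
  set rQ : A × B → ℝ := fun x => (ν.rnDeriv M x).toReal with hrQ
  have hsum : ∀ᵐ x ∂M, rP x + rQ x = 2 ∧ 0 ≤ rP x ∧ 0 ≤ rQ x := by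
    filter_upwards [hsumE] with x hx
    have hPt : μ.rnDeriv M x ≠ ⊤ :=
      ne_top_of_le_ne_top ENNReal.ofNat_ne_top (hx ▸ self_le_add_right _ _)
    have hQt : ν.rnDeriv M x ≠ ⊤ :=
      ne_top_of_le_ne_top ENNReal.ofNat_ne_top (hx ▸ self_le_add_left _ _)
    refine ⟨?_, ENNReal.toReal_nonneg, ENNReal.toReal_nonneg⟩
    rw [hrP, hrQ, ← ENNReal.toReal_add hPt hQt, hx]
    simp
  have hrPmeas : Measurable rP := (Measure.measurable_rnDeriv μ M).ennreal_toReal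
  have hrQmeas : Measurable rQ := (Measure.measurable_rnDeriv ν M).ennreal_toReal
  -- integrability of the log-likelihood ratios
  have hIP' : Integrable (fun x => rP x * llr μ M x) M := by
    refine Integrable.mono' (integrable_const 2)
      ((hrPmeas.mul (measurable_llr μ M)).aestronglyMeasurable) ?_
    filter_upwards [hsum] with x ⟨hx, hp, hq⟩
    have hp2 : rP x ≤ 2 := by linarith
    exact js_aux_bound hp hp2
  have hIQ' : Integrable (fun x => rQ x * llr ν M x) M := by
    refine Integrable.mono' (integrable_const 2)
      ((hrQmeas.mul (measurable_llr ν M)).aestronglyMeasurable) ?_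
    filter_upwards [hsum] with x ⟨hx, hp, hq⟩
    have hq2 : rQ x ≤ 2 := by linarith
    exact js_aux_bound hq hq2
  have hIP : Integrable (llr μ M) μ := by
    rw [← integrable_rnDeriv_smul_iff hμM]
    simpa [smul_eq_mul] using hIP'
  have hIQ : Integrable (llr ν M) ν := by
    rw [← integrable_rnDeriv_smul_iff hνM]
    simpa [smul_eq_mul] using hIQ'
  set a : ℝ := ∫ x, llr μ M x ∂μ with ha
  set b : ℝ := ∫ x, llr ν M x ∂ν with hb
  -- value of jsDiv
  have hkl1 : klDivM μ M = ENNReal.ofReal a := by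
    rw [klDivM, if_pos ⟨hμM, hIP⟩]
  have hkl2 : klDivM ν M = ENNReal.ofReal b := by
    rw [klDivM, if_pos ⟨hνM, hIQ⟩]
  have hjs : a + b ≤ 2 * (jsDiv μ ν).toReal := by
    rw [jsDiv, ← hM, hkl1, hkl2]
    rw [ENNReal.toReal_add (by finiteness) (by finiteness)]
    rw [ENNReal.toReal_mul, ENNReal.toReal_mul]
    have h2inv : ((2 : ℝ≥0∞)⁻¹).toReal = 2⁻¹ := by
      rw [ENNReal.toReal_inv]; norm_num
    rw [h2inv]
    have hx : a ≤ (ENNReal.ofReal a).toReal := by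
      rcases le_or_gt 0 a with h | h
      · rw [ENNReal.toReal_ofReal h]
      · exact h.le.trans ENNReal.toReal_nonneg
    have hy : b ≤ (ENNReal.ofReal b).toReal := by
      rcases le_or_gt 0 b with h | h
      · rw [ENNReal.toReal_ofReal h]
      · exact h.le.trans ENNReal.toReal_nonneg
    linarith
  -- transfer integrals to M
  have htr1 : ∫ p, -softplus (-T p) ∂μ = ∫ x, rP x * (-softplus (-T x)) ∂M := by
    rw [← integral_rnDeriv_smul hμM]; rfl
  have htr2 : ∫ p, -softplus (T p) ∂ν = ∫ x, rQ x * (-softplus (T x)) ∂M := by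
    rw [← integral_rnDeriv_smul hνM]; rfl
  have htr3 : a = ∫ x, rP x * llr μ M x ∂M := by
    rw [ha, ← integral_rnDeriv_smul hμM]; rfl
  have htr4 : b = ∫ x, rQ x * llr ν M x ∂M := by
    rw [hb, ← integral_rnDeriv_smul hνM]; rfl
  -- integrability of the transferred softplus terms
  have hIP1 : Integrable (fun x => rP x * (-softplus (-T x))) M := by
    have := (integrable_rnDeriv_smul_iff hμM
      (f := fun p => -softplus (-T p))).mpr hμint.neg
    simpa [smul_eq_mul] using this
  have hIQ1 : Integrable (fun x => rQ x * (-softplus (T x))) M := by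
    have := (integrable_rnDeriv_smul_iff hνM
      (f := fun p => -softplus (T p))).mpr hprodint.neg
    simpa [smul_eq_mul] using this
  -- the main integral inequality
  have hIadd1 : Integrable (fun x => rP x * (-softplus (-T x)) + rQ x * (-softplus (T x))) M :=
    hIP1.add hIQ1
  have hIadd2 : Integrable (fun x => rP x * llr μ M x + rQ x * llr ν M x) M :=
    hIP'.add hIQ'
  have hmain : (∫ x, rP x * (-softplus (-T x)) ∂M) + (∫ x, rQ x * (-softplus (T x)) ∂M) ≤
      (∫ x, rP x * llr μ M x ∂M) + (∫ x, rQ x * llr ν M x ∂M) - Real.log 4 := by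
    have key : (∫ x, (rP x * (-softplus (-T x)) + rQ x * (-softplus (T x))) ∂M) ≤
        ∫ x, (rP x * llr μ M x + rQ x * llr ν M x - Real.log 4) ∂M := by
      refine integral_mono_ae hIadd1 (hIadd2.sub (integrable_const _)) ?_
      filter_upwards [hsum] with x ⟨hx, hp, hq⟩
      have hllrP : llr μ M x = Real.log (rP x) := rfl
      have hllrQ : llr ν M x = Real.log (rQ x) := rfl
      simp only [hllrP, hllrQ]
      have := js_aux2 (T x) hp hq hx
      linarith
    rw [integral_add hIP1 hIQ1, integral_sub hIadd2 (integrable_const _),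
      integral_add hIP' hIQ', integral_const] at key
    simpa [measure_univ] using key
  have final : (∫ p, -softplus (-T p) ∂μ) + (∫ p, -softplus (T p) ∂ν) ≤
      2 * (jsDiv μ ν).toReal - Real.log 4 := by
    calc (∫ p, -softplus (-T p) ∂μ) + ∫ p, -softplus (T p) ∂ν
        = (∫ x, rP x * (-softplus (-T x)) ∂M) + ∫ x, rQ x * (-softplus (T x)) ∂M := by
          rw [htr1, htr2]
      _ ≤ a + b - Real.log 4 := by rw [htr3, htr4]; exact hmain
      _ ≤ 2 * (jsDiv μ ν).toReal - Real.log 4 := by linarith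
  have hneg : (∫ p, -softplus (T p) ∂ν) = -(∫ p, softplus (T p) ∂ν) := integral_neg _
  rw [hneg] at final
  linarith
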